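/- The function f(ψ,τ) = (1/τ)·ln(1 + 1/ψ) is jointly convex on the domain {(ψ,τ) : ψ > 0, τ > 1}. -/

import Mathlib

open Real intervalIntegral

lemma amgm3 (p q s : ℝ) (hp : 0 < p) (hq : 0 < q) (hs : 0 < s) :
    3*p*q*s ≤ s^3 + p^2*q + p*q^2 := by
  nlinarith [mul_nonneg hq.le (sq_nonneg (p-s)), mul_nonneg hp.le (sq_nonneg (q-s)),
    mul_nonneg hs.le (sq_nonneg (p-q)), sq_nonneg (p-q), sq_nonneg (p+q-2*s), mul_pos hp hq]

lemma Tlem (x1 x2 y1 y2 : ℝ) (hx1 : 0 < x1) (hx2 : 0 < x2) (hy1 : 0 < y1) (hy2 : 0 < y2) :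
    3*x1*x2*y1*y2 ≤ y1^2*y2^2 + x1^2*x2*y2 + x1*x2^2*y1 := by
  have h := amgm3 (x1*y2) (x2*y1) (y1*y2) (by positivity) (by positivity) (by positivity)
  have hs : 0 < y1*y2 := by positivity
  nlinarith [h, hs]

lemma combo_pos {a b x y : ℝ} (ha : 0 ≤ a) (hb : 0 ≤ b) (hab : a + b = 1)
    (hx : 0 < x) (hy : 0 < y) : 0 < a * x + b * y := by
  rcases ha.eq_or_lt with h | h
  · have hb1 : b = 1 := by linarith
    simp [← h, hb1, hy]
  · nlinarith [mul_pos h hx, mul_nonneg hb hy.le]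

lemma inv_mul_convex (a b x1 x2 y1 y2 : ℝ) (ha : 0 ≤ a) (hb : 0 ≤ b) (hab : a + b = 1)
    (hx1 : 0 < x1) (hx2 : 0 < x2) (hy1 : 0 < y1) (hy2 : 0 < y2) :
    ((a*x1+b*y1)*(a*x2+b*y2))⁻¹ ≤ a * (x1*x2)⁻¹ + b * (y1*y2)⁻¹ := by
  have hp : 0 < (a*x1+b*y1) := combo_pos ha hb hab hx1 hy1
  have hq : 0 < (a*x2+b*y2) := combo_pos ha hb hab hx2 hy2
  rw [show ((a*x1+b*y1)*(a*x2+b*y2))⁻¹ = 1/((a*x1+b*y1)*(a*x2+b*y2)) from (one_div _).symm,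
    show (x1*x2)⁻¹ = 1/(x1*x2) from (one_div _).symm,
    show (y1*y2)⁻¹ = 1/(y1*y2) from (one_div _).symm,
    mul_one_div, mul_one_div, div_add_div _ _ (by positivity) (by positivity),
    div_le_div_iff₀ (by positivity) (by positivity)]
  have hT1 := Tlem x1 x2 y1 y2 hx1 hx2 hy1 hy2
  have hT2 := Tlem y1 y2 x1 x2 hy1 hy2 hx1 hx2
  have hb' : b = 1 - a := by linarith
  subst hb'
  nlinarith [mul_nonneg (mul_nonneg ha (mul_nonneg (by linarith : (0:ℝ) ≤ 1-a) (by linarith : (0:ℝ) ≤ 1-a)))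
      (by linarith : (0:ℝ) ≤ y1^2*y2^2 + x1^2*x2*y2 + x1*x2^2*y1 - 3*x1*x2*y1*y2),
    mul_nonneg (mul_nonneg (mul_nonneg ha ha) (by linarith : (0:ℝ) ≤ 1-a))
      (by linarith : (0:ℝ) ≤ x1^2*x2^2 + y1^2*y2*x2 + y1*y2^2*x1 - 3*y1*y2*x1*x2)]

lemma int_id (ψ τ : ℝ) (hψ : 0 < ψ) (hτ : 0 < τ) :
    (1 / τ) * Real.log (1 + 1 / ψ) = ∫ s in (0:ℝ)..1, (τ * (ψ + s))⁻¹ := by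
  have h1 : ∀ s ∈ Set.uIcc (0:ℝ) 1, HasDerivAt (fun u => Real.log (ψ + u)) ((ψ + s)⁻¹) s := by
    intro s hs
    rw [Set.uIcc_of_le (by norm_num)] at hs
    have hpos : 0 < ψ + s := by have := hs.1; linarith
    simpa [Function.comp_def] using (Real.hasDerivAt_log hpos.ne').comp s ((hasDerivAt_id s).const_add ψ)
  have hcont : ContinuousOn (fun s : ℝ => (ψ + s)⁻¹) (Set.uIcc 0 1) := by
    apply ContinuousOn.inv₀ (by fun_prop)
    intro s hs
    rw [Set.uIcc_of_le (by norm_num)] at hs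
    have := hs.1; positivity
  have key : (∫ s in (0:ℝ)..1, (ψ + s)⁻¹) = Real.log (ψ + 1) - Real.log (ψ + 0) :=
    integral_eq_sub_of_hasDerivAt h1 (hcont.intervalIntegrable)
  have : (∫ s in (0:ℝ)..1, (τ * (ψ + s))⁻¹) = τ⁻¹ * ∫ s in (0:ℝ)..1, (ψ + s)⁻¹ := by
    rw [← integral_const_mul]
    congr 1; ext s; rw [mul_inv]
  rw [this, key]
  rw [show (1:ℝ) + 1/ψ = (ψ+1)/ψ by field_simp]
  rw [Real.log_div (by positivity) hψ.ne']
  ring_nf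

lemma intble (ψ τ : ℝ) (hψ : 0 < ψ) (hτ : 0 < τ) :
    IntervalIntegrable (fun s : ℝ => (τ * (ψ + s))⁻¹) MeasureTheory.volume 0 1 := by
  apply ContinuousOn.intervalIntegrable
  apply ContinuousOn.inv₀ (by fun_prop)
  intro s hs
  rw [Set.uIcc_of_le (by norm_num)] at hs
  have h1 : 0 ≤ s := hs.1
  have : 0 < ψ + s := by linarith
  positivity

/-- The function f(ψ,τ) = (1/τ)·ln(1 + 1/ψ) is jointly convex on
{(ψ,τ) : ψ > 0, τ > 1}. -/
theorem rate_slack_convex :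
    ConvexOn ℝ {x : ℝ × ℝ | 0 < x.1 ∧ 1 < x.2}
      (fun x : ℝ × ℝ => (1 / x.2) * Real.log (1 + 1 / x.1)) := by
  constructor
  · intro x hx y hy a b ha hb hab
    refine ⟨?_, ?_⟩
    · simpa using combo_pos ha hb hab hx.1 hy.1
    · have h := combo_pos ha hb hab (by linarith [hx.2] : (0:ℝ) < x.2 - 1)
        (by linarith [hy.2] : (0:ℝ) < y.2 - 1)
      simp only [Prod.smul_fst, Prod.smul_snd, Prod.fst_add, Prod.snd_add, smul_eq_mul,
        Set.mem_setOf_eq]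
      nlinarith
  · intro x hx y hy a b ha hb hab
    obtain ⟨hx1, hx2⟩ := hx
    obtain ⟨hy1, hy2⟩ := hy
    have hx2' : (0:ℝ) < x.2 := by linarith
    have hy2' : (0:ℝ) < y.2 := by linarith
    have hc1 : (0:ℝ) < a * x.1 + b * y.1 := combo_pos ha hb hab hx1 hy1
    have hc2 : (0:ℝ) < a * x.2 + b * y.2 := combo_pos ha hb hab hx2' hy2'
    have hfst : (a • x + b • y).1 = a * x.1 + b * y.1 := by simp
    have hsnd : (a • x + b • y).2 = a * x.2 + b * y.2 := by simp
    simp only [hfst, hsnd, smul_eq_mul]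
    rw [int_id _ _ hc1 hc2, int_id _ _ hx1 hx2', int_id _ _ hy1 hy2',
      ← integral_const_mul, ← integral_const_mul,
      ← integral_add ((intble _ _ hx1 hx2').const_mul a) ((intble _ _ hy1 hy2').const_mul b)]
    apply integral_mono_on (by norm_num)
      (intble _ _ hc1 hc2)
      (((intble _ _ hx1 hx2').const_mul a).add ((intble _ _ hy1 hy2').const_mul b))
    intro s hs
    have hs0 : 0 ≤ s := hs.1
    have hxs : 0 < x.1 + s := by linarith
    have hys : 0 < y.1 + s := by linarith
    have key := inv_mul_convex a b x.2 (x.1 + s) y.2 (y.1 + s) ha hb hab hx2' hxs hy2' hys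
    calc ((a * x.2 + b * y.2) * (a * x.1 + b * y.1 + s))⁻¹
        = ((a * x.2 + b * y.2) * (a * (x.1 + s) + b * (y.1 + s)))⁻¹ := by
          congr 1
          have hb' : b = 1 - a := by linarith
          subst hb'; ring
      _ ≤ a * (x.2 * (x.1 + s))⁻¹ + b * (y.2 * (y.1 + s))⁻¹ := key
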